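/- Let H be an index-two normal subgroup of a finite group K and let U be an irreducible real H-module of quaternionic type whose character is K-invariant. If U admits a K-extension, then either there are exactly two non-isomorphic K-extensions both of quaternionic type, or there is a unique K-extension of complex type, and not both. -/

import Mathlib

open Module

/-- Restriction of a representation to a subgroup. -/
def resRep {K : Type*} [Group K] (H : Subgroup K) {U : Type*} [AddCommGroup U] [Module ℝ U]
    (ψ : Representation ℝ K U) : Representation ℝ H U :=
  ψ.comp H.subtype

/-- A representation is irreducible: nonzero space and no proper nonzero invariant submodule. -/
def IsIrreducibleRep {G U : Type*} [Group G] [AddCommGroup U] [Module ℝ U]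
    (ρ : Representation ℝ G U) : Prop :=
  (∃ u : U, u ≠ 0) ∧
    ∀ p : Submodule ℝ U, (∀ (g : G) (u : U), u ∈ p → ρ g u ∈ p) → p = ⊥ ∨ p = ⊤

/-- The space of equivariant linear maps between two representations. -/
def repHom {G U V : Type*} [Group G] [AddCommGroup U] [Module ℝ U] [AddCommGroup V]
    [Module ℝ V] (ρ : Representation ℝ G U) (ψ : Representation ℝ G V) :
    Submodule ℝ (U →ₗ[ℝ] V) where
  carrier := {f | ∀ (g : G) (u : U), f (ρ g u) = ψ g (f u)}
  add_mem' := by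
    intro f f' hf hf' g u
    simp [hf g u, hf' g u]
  zero_mem' := by intro g u; simp
  smul_mem' := by
    intro c f hf g u
    simp [hf g u]

/-- Isomorphism of representations. -/
def RepIso {G U V : Type*} [Group G] [AddCommGroup U] [Module ℝ U] [AddCommGroup V]
    [Module ℝ V] (ρ : Representation ℝ G U) (ψ : Representation ℝ G V) : Prop :=
  ∃ e : U ≃ₗ[ℝ] V, ∀ (g : G) (u : U), e (ρ g u) = ψ g (e u)

/-- The character of a representation of a subgroup is invariant under conjugation by the
ambient group. -/
def charConjInvariant {K U : Type*} [Group K] [AddCommGroup U] [Module ℝ U] (H : Subgroup K)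
    (ρ : Representation ℝ H U) : Prop :=
  ∀ (g : K) (h k : H), (k : K) = g⁻¹ * h * g →
    LinearMap.trace ℝ U (ρ k) = LinearMap.trace ℝ U (ρ h)

/-- The carrier of the induced representation `Ind_H^K U`. -/
def indSubmodule {K U : Type*} [Group K] [AddCommGroup U] [Module ℝ U] (H : Subgroup K)
    (ρ : Representation ℝ H U) : Submodule ℝ (K → U) where
  carrier := {f | ∀ (h : H) (k : K), f (h * k) = ρ h (f k)}
  add_mem' := by
    intro f f' hf hf' h k
    simp [hf h k, hf' h k]
  zero_mem' := by intro h k; simp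
  smul_mem' := by
    intro c f hf h k
    simp [hf h k]

/-- The induced representation `Ind_H^K U`. -/
def indRep {K U : Type*} [Group K] [AddCommGroup U] [Module ℝ U] (H : Subgroup K)
    (ρ : Representation ℝ H U) : Representation ℝ K (indSubmodule H ρ) where
  toFun g :=
    { toFun := fun f => ⟨fun k => f.1 (k * g), by
        intro h k
        dsimp only
        rw [mul_assoc]
        exact f.2 h (k * g)⟩
      map_add' := by intro f f'; rfl
      map_smul' := by intro c f; rfl }
  map_one' := by
    refine LinearMap.ext fun f => Subtype.ext (funext fun k => ?_)
    simp
  map_mul' := by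
    intro g g'
    refine LinearMap.ext fun f => Subtype.ext (funext fun k => ?_)
    simp [mul_assoc]

/-- The direct sum of two copies of a representation. -/
def doubleRep {G U : Type*} [Group G] [AddCommGroup U] [Module ℝ U]
    (ρ : Representation ℝ G U) : Representation ℝ G (U × U) where
  toFun g := (ρ g).prodMap (ρ g)
  map_one' := by
    refine LinearMap.ext fun u => ?_
    simp
  map_mul' := by
    intro g g'
    refine LinearMap.ext fun u => ?_
    simp [Module.End.mul_apply]

/-- The real dimension of the space of equivariant linear maps. -/
noncomputable def dimRepHom {G U V : Type*} [Group G] [AddCommGroup U] [Module ℝ U]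
    [AddCommGroup V] [Module ℝ V] (ρ : Representation ℝ G U)
    (ψ : Representation ℝ G V) : ℕ :=
  Module.finrank ℝ (repHom ρ ψ)
section Auxiliary

variable {K G : Type*} [Group G] {U W : Type*} [AddCommGroup U] [Module ℝ U]
  [AddCommGroup W] [Module ℝ W]

theorem repIso_refl (ρ : Representation ℝ G U) : RepIso ρ ρ :=
  ⟨LinearEquiv.refl ℝ U, fun _ _ => rfl⟩

theorem repIso_symm {ρ : Representation ℝ G U} {ψ : Representation ℝ G W}
    (h : RepIso ρ ψ) : RepIso ψ ρ := by
  obtain ⟨e, he⟩ := h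
  refine ⟨e.symm, fun g v => e.injective ?_⟩
  rw [he, e.apply_symm_apply, e.apply_symm_apply]

theorem repIso_trans {V : Type*} [AddCommGroup V] [Module ℝ V]
    {ρ : Representation ℝ G U} {ψ : Representation ℝ G W} {χ : Representation ℝ G V}
    (h1 : RepIso ρ ψ) (h2 : RepIso ψ χ) : RepIso ρ χ := by
  obtain ⟨e, he⟩ := h1
  obtain ⟨f, hf⟩ := h2
  exact ⟨e.trans f, fun g u => by simp [LinearEquiv.trans_apply, he, hf]⟩

/-- Schur's lemma: a nonzero equivariant endomorphism of an irreducible representation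
is invertible, with equivariant inverse. -/
theorem schur_aux {ρ : Representation ℝ G U} (hirr : IsIrreducibleRep ρ)
    (T : U →ₗ[ℝ] U) (hTE : ∀ (g : G) (u : U), T (ρ g u) = ρ g (T u)) (hT0 : T ≠ 0) :
    ∃ S : U →ₗ[ℝ] U, (∀ (g : G) (u : U), S (ρ g u) = ρ g (S u)) ∧
      (∀ u, S (T u) = u) ∧ (∀ u, T (S u) = u) := by
  have hker : LinearMap.ker T = ⊥ := by
    rcases hirr.2 (LinearMap.ker T) (fun g u hu => by
      rw [LinearMap.mem_ker] at hu ⊢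
      rw [hTE, hu, map_zero]) with h | h
    · exact h
    · exact absurd (LinearMap.ker_eq_top.mp h) hT0
  have hrange : LinearMap.range T = ⊤ := by
    rcases hirr.2 (LinearMap.range T) (fun g u hu => by
      obtain ⟨v, rfl⟩ := hu
      exact ⟨ρ g v, hTE g v⟩) with h | h
    · exact absurd (LinearMap.range_eq_bot.mp h) hT0
    · exact h
  have hbij : Function.Bijective T :=
    ⟨LinearMap.ker_eq_bot.mp hker, LinearMap.range_eq_top.mp hrange⟩
  let e := LinearEquiv.ofBijective T hbij
  have heT : ∀ x, e x = T x := fun x => rfl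
  refine ⟨e.symm.toLinearMap, fun g u => e.injective ?_, fun u => ?_, fun u => ?_⟩
  · show e (e.symm (ρ g u)) = e (ρ g (e.symm u))
    rw [heT (ρ g (e.symm u)), hTE, e.apply_symm_apply, ← heT, e.apply_symm_apply]
  · show e.symm (T u) = u
    rw [← heT]; exact e.symm_apply_apply u
  · show T (e.symm u) = u
    rw [← heT]; exact e.apply_symm_apply u

/-- Transport of a representation along a linear equivalence. -/
def conjRep (σ : Representation ℝ G U) (e : U ≃ₗ[ℝ] W) : Representation ℝ G W where
  toFun g := e.toLinearMap ∘ₗ (σ g) ∘ₗ e.symm.toLinearMap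
  map_one' := by
    ext w; simp
  map_mul' g g' := by
    ext w
    simp [Module.End.mul_apply, map_mul]

theorem conjRep_apply (σ : Representation ℝ G U) (e : U ≃ₗ[ℝ] W) (g : G) (w : W) :
    conjRep σ e g w = e (σ g (e.symm w)) := rfl

theorem repIso_conjRep (σ : Representation ℝ G U) (e : U ≃ₗ[ℝ] W) :
    RepIso σ (conjRep σ e) :=
  ⟨e, fun g u => by simp [conjRep_apply]⟩

open Classical in
/-- The sign function of an index-two subgroup. -/
noncomputable def signFun [Group K] (H : Subgroup K) : K → ℝ := fun g => if g ∈ H then 1 else -1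

/-- The twist of a representation by the sign character of an index-two subgroup. -/
noncomputable def signRep [Group K] (H : Subgroup K) (hidx : H.index = 2)
    (σ : Representation ℝ K U) : Representation ℝ K U where
  toFun g := signFun H g • σ g
  map_one' := by
    simp [signFun, one_mem]
  map_mul' g g' := by
    have hmul : signFun H (g * g') = signFun H g * signFun H g' := by
      simp only [signFun]
      by_cases hg : g ∈ H <;> by_cases hg' : g' ∈ H <;>
        simp [hg, hg', Subgroup.mul_mem_iff_of_index_two hidx]
    show signFun H (g * g') • σ (g * g') = (signFun H g • σ g) * (signFun H g' • σ g')
    rw [hmul, map_mul, smul_mul_smul_comm]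

theorem signRep_apply [Group K] (H : Subgroup K) (hidx : H.index = 2)
    (σ : Representation ℝ K U) (g : K) : signRep H hidx σ g = signFun H g • σ g := rfl

end Auxiliary

theorem mem_repHom_iff {G U V : Type*} [Group G] [AddCommGroup U] [Module ℝ U]
    [AddCommGroup V] [Module ℝ V] (ρ : Representation ℝ G U) (ψ : Representation ℝ G V)
    (f : U →ₗ[ℝ] V) :
    f ∈ repHom ρ ψ ↔ ∀ (g : G) (u : U), f (ρ g u) = ψ g (f u) := Iff.rfl

/-- Let `H` be an index-two normal subgroup of a finite group `K` and `U`
an irreducible real `H`-module of quaternionic type (`d(U) = 4`) with `K`-invariant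
character.  If `U` admits a `K`-extension, then either there are exactly two non-isomorphic
`K`-extensions, both of quaternionic type, or there is a unique `K`-extension, of complex
type, and not both. -/
theorem extensions_of_quaternionic_type {K : Type} [Group K] [Finite K] (H : Subgroup K)
    [H.Normal] (hidx : H.index = 2) {U : Type} [AddCommGroup U] [Module ℝ U]
    [FiniteDimensional ℝ U] (ρ : Representation ℝ H U) (hirr : IsIrreducibleRep ρ)
    (hquat : dimRepHom ρ ρ = 4) (hinv : charConjInvariant H ρ)
    (hext : ∃ σ : Representation ℝ K U, RepIso (resRep H σ) ρ) :
    Xor'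
      (∃ σ₁ σ₂ : Representation ℝ K U,
        RepIso (resRep H σ₁) ρ ∧ RepIso (resRep H σ₂) ρ ∧ ¬ RepIso σ₁ σ₂ ∧
        dimRepHom σ₁ σ₁ = 4 ∧ dimRepHom σ₂ σ₂ = 4 ∧
        ∀ (W : Type) [AddCommGroup W] [Module ℝ W] (ψ : Representation ℝ K W),
          RepIso (resRep H ψ) ρ → (RepIso ψ σ₁ ∨ RepIso ψ σ₂))
      (∃ σ : Representation ℝ K U,
        RepIso (resRep H σ) ρ ∧ dimRepHom σ σ = 2 ∧
        ∀ (W : Type) [AddCommGroup W] [Module ℝ W] (ψ : Representation ℝ K W),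
          RepIso (resRep H ψ) ρ → RepIso ψ σ) := by
  classical
  obtain ⟨u0, hu0⟩ := hirr.1
  obtain ⟨σ₀, e₀, he₀⟩ := hext
  -- Replace the extension by a conjugate restricting *exactly* to `ρ`.
  obtain ⟨σ, hres⟩ : ∃ σ : Representation ℝ K U, ∀ (h : H) (u : U), σ (h : K) u = ρ h u := by
    refine ⟨conjRep σ₀ e₀, fun h u => ?_⟩
    have := he₀ h (e₀.symm u)
    simpa [conjRep_apply, resRep] using this
  have hcomp : ∀ (a b : K) (u : U), σ a (σ b u) = σ (a * b) u := fun a b u => by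
    rw [map_mul]; rfl
  have hone : ∀ u : U, σ 1 u = u := fun u => by rw [map_one]; rfl
  obtain ⟨g₀, hg₀⟩ : ∃ g : K, g ∉ H := by
    by_contra hc
    push_neg at hc
    have hH : H = ⊤ := (Subgroup.eq_top_iff' H).mpr hc
    rw [hH, Subgroup.index_top] at hidx
    norm_num at hidx
  have hmulmem : ∀ {a b : K}, a * b ∈ H ↔ (a ∈ H ↔ b ∈ H) :=
    fun {a b} => Subgroup.mul_mem_iff_of_index_two hidx
  have hg₀inv : g₀⁻¹ ∉ H := fun hc => hg₀ (by simpa using inv_mem hc)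
  have hsq : g₀ * g₀ ∈ H := hmulmem.mpr Iff.rfl
  have hnorm : H.Normal := inferInstance
  have hmemconj : ∀ (g : K) (h : H), g * (h : K) * g⁻¹ ∈ H := fun g h =>
    hnorm.conj_mem (h : K) h.2 g
  have hA'A : ∀ u : U, σ g₀⁻¹ (σ g₀ u) = u := fun u => by
    rw [hcomp, inv_mul_cancel]; exact hone u
  have hAA' : ∀ u : U, σ g₀ (σ g₀⁻¹ u) = u := fun u => by
    rw [hcomp, mul_inv_cancel]; exact hone u
  -- conjugation relation between σ(g) and ρ
  have hσρ : ∀ (g : K) (h h' : H), (h' : K) = g * (h : K) * g⁻¹ → ∀ u : U,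
      σ g (ρ h u) = ρ h' (σ g u) := by
    intro g h h' hh' u
    calc σ g (ρ h u) = σ g (σ (h : K) u) := by rw [hres]
      _ = σ (g * (h : K)) u := hcomp _ _ _
      _ = σ ((h' : K) * g) u := by
          rw [hh', show g * (h : K) * g⁻¹ * g = g * (h : K) from by group]
      _ = σ ((h' : K)) (σ g u) := (hcomp _ _ _).symm
      _ = ρ h' (σ g u) := hres h' (σ g u)
  -- σ(g₀)² acts through ρ
  have hAA : ∀ u : U, σ g₀ (σ g₀ u) = ρ ⟨g₀ * g₀, hsq⟩ u := fun u => by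
    rw [hcomp]; exact hres ⟨g₀ * g₀, hsq⟩ u
  have hA'h₀ : ∀ x : U, σ g₀⁻¹ (ρ ⟨g₀ * g₀, hsq⟩ x) = σ g₀ x := by
    intro x
    have h2 : σ ((g₀ * g₀ : K)) x = ρ ⟨g₀ * g₀, hsq⟩ x := hres ⟨g₀ * g₀, hsq⟩ x
    rw [← h2, hcomp, show g₀⁻¹ * (g₀ * g₀) = g₀ from by group]
  -- coset decomposition
  have hcoset : ∀ (g : K) (hm : g * g₀⁻¹ ∈ H) (u : U),
      σ g u = ρ ⟨g * g₀⁻¹, hm⟩ (σ g₀ u) := by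
    intro g hm u
    calc σ g u = σ (g * g₀⁻¹ * g₀) u := by rw [inv_mul_cancel_right]
      _ = σ ((g * g₀⁻¹ : K)) (σ g₀ u) := (hcomp _ _ _).symm
      _ = ρ ⟨g * g₀⁻¹, hm⟩ (σ g₀ u) := hres ⟨g * g₀⁻¹, hm⟩ (σ g₀ u)
  -- "α" preserves E
  have hαE : ∀ (c : U →ₗ[ℝ] U), (∀ (h : H) (u : U), c (ρ h u) = ρ h (c u)) →
      ∀ (h : H) (u : U), σ g₀⁻¹ (c (σ g₀ (ρ h u))) = ρ h (σ g₀⁻¹ (c (σ g₀ u))) := by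
    intro c hc h u
    have s1 : σ g₀ (ρ h u) = ρ (⟨g₀ * (h : K) * g₀⁻¹, hmemconj g₀ h⟩ : H) (σ g₀ u) :=
      hσρ g₀ h ⟨g₀ * (h : K) * g₀⁻¹, hmemconj g₀ h⟩ rfl u
    have s2 : σ g₀⁻¹ (ρ (⟨g₀ * (h : K) * g₀⁻¹, hmemconj g₀ h⟩ : H) (c (σ g₀ u))) =
        ρ h (σ g₀⁻¹ (c (σ g₀ u))) :=
      hσρ g₀⁻¹ ⟨g₀ * (h : K) * g₀⁻¹, hmemconj g₀ h⟩ h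
        (by show (h : K) = g₀⁻¹ * (g₀ * (h : K) * g₀⁻¹) * g₀⁻¹⁻¹; group) _
    rw [s1, hc, s2]
  -- the sign twist
  obtain ⟨εσ, hεres, hεneg⟩ : ∃ εσ : Representation ℝ K U,
      (∀ (h : H) (u : U), εσ (h : K) u = ρ h u) ∧
      (∀ g : K, g ∉ H → ∀ u : U, εσ g u = -(σ g u)) := by
    refine ⟨signRep H hidx σ, fun h u => ?_, fun g hg u => ?_⟩
    · have h1 : signRep H hidx σ (h : K) u = signFun H (h : K) • σ (h : K) u := rfl
      rw [h1, signFun, if_pos h.2, one_smul, hres]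
    · have h1 : signRep H hidx σ g u = signFun H g • σ g u := rfl
      rw [h1, signFun, if_neg hg, neg_one_smul]
  -- membership characterizations
  have memF : ∀ T : U →ₗ[ℝ] U, T ∈ repHom σ σ ↔
      ((∀ (h : H) (u : U), T (ρ h u) = ρ h (T u)) ∧
        ∀ u : U, T (σ g₀ u) = σ g₀ (T u)) := by
    intro T
    rw [mem_repHom_iff]
    constructor
    · intro hT
      refine ⟨fun h u => ?_, fun u => hT g₀ u⟩
      have := hT (h : K) u
      rwa [hres, hres] at this
    · rintro ⟨h1, h2⟩ g u
      by_cases hg : g ∈ H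
      · have e1 : σ (g : K) u = ρ ⟨g, hg⟩ u := hres ⟨g, hg⟩ u
        have e2 : σ (g : K) (T u) = ρ ⟨g, hg⟩ (T u) := hres ⟨g, hg⟩ (T u)
        rw [e1, e2]; exact h1 ⟨g, hg⟩ u
      · have hm : g * g₀⁻¹ ∈ H := hmulmem.mpr (iff_of_false hg hg₀inv)
        rw [hcoset g hm u, hcoset g hm (T u), h1, h2]
  have memF' : ∀ T : U →ₗ[ℝ] U, T ∈ repHom σ εσ ↔
      ((∀ (h : H) (u : U), T (ρ h u) = ρ h (T u)) ∧
        ∀ u : U, T (σ g₀ u) = -(σ g₀ (T u))) := by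
    intro T
    rw [mem_repHom_iff]
    constructor
    · intro hT
      refine ⟨fun h u => ?_, fun u => ?_⟩
      · have := hT (h : K) u
        rwa [hres, hεres] at this
      · have := hT g₀ u
        rwa [hεneg g₀ hg₀] at this
    · rintro ⟨h1, h2⟩ g u
      by_cases hg : g ∈ H
      · have e1 : σ (g : K) u = ρ ⟨g, hg⟩ u := hres ⟨g, hg⟩ u
        have e2 : εσ (g : K) (T u) = ρ ⟨g, hg⟩ (T u) := hεres ⟨g, hg⟩ (T u)
        rw [e1, e2]; exact h1 ⟨g, hg⟩ u
      · have hm : g * g₀⁻¹ ∈ H := hmulmem.mpr (iff_of_false hg hg₀inv)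
        rw [hεneg g hg (T u), hcoset g hm u, hcoset g hm (T u), h1, h2, map_neg]
  -- the classification of extensions via elements T with α(T)T = 1
  have key : ∀ (W : Type) [AddCommGroup W] [Module ℝ W] (ψ : Representation ℝ K W),
      RepIso (resRep H ψ) ρ →
      ∃ T : U →ₗ[ℝ] U,
        (∀ (h : H) (u : U), T (ρ h u) = ρ h (T u)) ∧
        (∀ u : U, T (σ g₀ (T u)) = σ g₀ u) ∧
        (∀ c : U →ₗ[ℝ] U, (∀ (h : H) (u : U), c (ρ h u) = ρ h (c u)) →
          Function.Bijective c →
          ((∀ u : U, c (σ g₀ (T u)) = σ g₀ (c u)) → RepIso ψ σ) ∧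
          ((∀ u : U, c (σ g₀ (T u)) = -(σ g₀ (c u))) → RepIso ψ εσ)) := by
    intro W _ _ ψ hψ
    obtain ⟨f, hf⟩ := hψ
    obtain ⟨τ, hψτ, hτres⟩ : ∃ τ : Representation ℝ K U, RepIso ψ τ ∧
        ∀ (h : H) (u : U), τ (h : K) u = ρ h u := by
      refine ⟨conjRep ψ f, repIso_conjRep ψ f, fun h u => ?_⟩
      have := hf h (f.symm u)
      simpa [conjRep_apply, resRep] using this
    have hτcomp : ∀ (a b : K) (u : U), τ a (τ b u) = τ (a * b) u := fun a b u => by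
      rw [map_mul]; rfl
    have hτcoset : ∀ (g : K) (hm : g * g₀⁻¹ ∈ H) (u : U),
        τ g u = ρ ⟨g * g₀⁻¹, hm⟩ (τ g₀ u) := by
      intro g hm u
      calc τ g u = τ (g * g₀⁻¹ * g₀) u := by rw [inv_mul_cancel_right]
        _ = τ ((g * g₀⁻¹ : K)) (τ g₀ u) := (hτcomp _ _ _).symm
        _ = ρ ⟨g * g₀⁻¹, hm⟩ (τ g₀ u) := hτres ⟨g * g₀⁻¹, hm⟩ (τ g₀ u)
    refine ⟨(σ g₀⁻¹) ∘ₗ (τ g₀), ?_, ?_, ?_⟩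
    · -- T ∈ E
      intro h u
      have e1 : τ g₀ (ρ h u) = ρ (⟨g₀ * (h : K) * g₀⁻¹, hmemconj g₀ h⟩ : H) (τ g₀ u) := by
        calc τ g₀ (ρ h u) = τ g₀ (τ ((h : K)) u) := by rw [hτres]
          _ = τ (g₀ * (h : K)) u := hτcomp _ _ _
          _ = τ ((g₀ * (h : K) * g₀⁻¹) * g₀) u := by
              rw [show (g₀ * (h : K) * g₀⁻¹) * g₀ = g₀ * (h : K) from by group]
          _ = τ ((g₀ * (h : K) * g₀⁻¹ : K)) (τ g₀ u) := (hτcomp _ _ _).symm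
          _ = ρ (⟨g₀ * (h : K) * g₀⁻¹, hmemconj g₀ h⟩ : H) (τ g₀ u) :=
              hτres ⟨g₀ * (h : K) * g₀⁻¹, hmemconj g₀ h⟩ (τ g₀ u)
      have e2 : σ g₀⁻¹ (ρ (⟨g₀ * (h : K) * g₀⁻¹, hmemconj g₀ h⟩ : H) (τ g₀ u)) =
          ρ h (σ g₀⁻¹ (τ g₀ u)) :=
        hσρ g₀⁻¹ ⟨g₀ * (h : K) * g₀⁻¹, hmemconj g₀ h⟩ h
          (by show (h : K) = g₀⁻¹ * (g₀ * (h : K) * g₀⁻¹) * g₀⁻¹⁻¹; group) _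
      simp only [LinearMap.comp_apply]
      rw [e1, e2]
    · -- α(T) T = 1
      intro u
      simp only [LinearMap.comp_apply]
      rw [hAA', hτcomp]
      have h2 : τ ((g₀ * g₀ : K)) u = ρ ⟨g₀ * g₀, hsq⟩ u := hτres ⟨g₀ * g₀, hsq⟩ u
      rw [h2]
      exact hA'h₀ u
    · -- the isomorphism criteria
      intro c hcE hcbij
      have hAT : ∀ u : U, σ g₀ (((σ g₀⁻¹) ∘ₗ (τ g₀)) u) = τ g₀ u := fun u => by
        simp only [LinearMap.comp_apply]; rw [hAA']
      constructor
      · intro hc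
        refine repIso_trans hψτ ⟨LinearEquiv.ofBijective c hcbij, ?_⟩
        intro g u
        show c (τ g u) = σ g (c u)
        by_cases hg : g ∈ H
        · have e1 : τ (g : K) u = ρ ⟨g, hg⟩ u := hτres ⟨g, hg⟩ u
          have e2 : σ (g : K) (c u) = ρ ⟨g, hg⟩ (c u) := hres ⟨g, hg⟩ (c u)
          rw [e1, e2]; exact hcE ⟨g, hg⟩ u
        · have hm : g * g₀⁻¹ ∈ H := hmulmem.mpr (iff_of_false hg hg₀inv)
          have hc' := hc u
          rw [hAT] at hc'
          rw [hτcoset g hm u, hcoset g hm (c u), hcE, hc']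
      · intro hc
        refine repIso_trans hψτ ⟨LinearEquiv.ofBijective c hcbij, ?_⟩
        intro g u
        show c (τ g u) = εσ g (c u)
        by_cases hg : g ∈ H
        · have e1 : τ (g : K) u = ρ ⟨g, hg⟩ u := hτres ⟨g, hg⟩ u
          have e2 : εσ (g : K) (c u) = ρ ⟨g, hg⟩ (c u) := hεres ⟨g, hg⟩ (c u)
          rw [e1, e2]; exact hcE ⟨g, hg⟩ u
        · have hm : g * g₀⁻¹ ∈ H := hmulmem.mpr (iff_of_false hg hg₀inv)
          have hc' := hc u
          rw [hAT] at hc'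
          rw [hεneg g hg (c u), hτcoset g hm u, hcoset g hm (c u), hcE, hc', map_neg]
  -- statement components for σ and εσ
  have hiso1 : RepIso (resRep H σ) ρ :=
    ⟨LinearEquiv.refl ℝ U, fun h u => by simpa [resRep] using hres h u⟩
  have hiso2 : RepIso (resRep H εσ) ρ :=
    ⟨LinearEquiv.refl ℝ U, fun h u => by simpa [resRep] using hεres h u⟩
  -- main case split: does σ(g₀) centralize E?
  by_cases hcase : ∀ T : U →ₗ[ℝ] U, (∀ (h : H) (u : U), T (ρ h u) = ρ h (T u)) →
      ∀ u : U, T (σ g₀ u) = σ g₀ (T u)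
  · -- quaternionic case: two extensions σ and εσ
    have hniso : ¬ RepIso σ εσ := by
      rintro ⟨e, he⟩
      have hcE : ∀ (h : H) (u : U), e.toLinearMap (ρ h u) = ρ h (e.toLinearMap u) := by
        intro h u
        have := he (h : K) u
        rw [hres, hεres] at this
        simpa using this
      have h1 := he g₀ u0
      rw [hεneg g₀ hg₀ (e u0)] at h1
      have h2 := hcase e.toLinearMap hcE u0
      simp only [LinearEquiv.coe_coe] at h2
      rw [h2] at h1
      have h3 : σ g₀ (e u0) = 0 := by
        have h4 : σ g₀ (e u0) + σ g₀ (e u0) = 0 := by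
          nth_rewrite 1 [h1]
          exact neg_add_cancel _
        have h5 : (2 : ℝ) • σ g₀ (e u0) = 0 := by rw [two_smul]; exact h4
        rcases smul_eq_zero.mp h5 with h | h
        · norm_num at h
        · exact h
      have h6 : e u0 = 0 := by
        have := congrArg (σ g₀⁻¹) h3
        rwa [hA'A, map_zero] at this
      exact hu0 (e.map_eq_zero_iff.mp h6)
    have hFull : repHom σ σ = repHom ρ ρ := by
      apply le_antisymm
      · intro T hT
        rw [mem_repHom_iff] at hT ⊢
        intro h u
        have := hT (h : K) u
        rwa [hres, hres] at this
      · intro T hT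
        rw [mem_repHom_iff] at hT
        exact (memF T).mpr ⟨hT, hcase T hT⟩
    have hεFull : repHom εσ εσ = repHom ρ ρ := by
      apply le_antisymm
      · intro T hT
        rw [mem_repHom_iff] at hT ⊢
        intro h u
        have := hT (h : K) u
        rwa [hεres, hεres] at this
      · intro T hT
        rw [mem_repHom_iff] at hT ⊢
        intro g u
        by_cases hg : g ∈ H
        · have e1 : εσ (g : K) u = ρ ⟨g, hg⟩ u := hεres ⟨g, hg⟩ u
          have e2 : εσ (g : K) (T u) = ρ ⟨g, hg⟩ (T u) := hεres ⟨g, hg⟩ (T u)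
          rw [e1, e2]; exact hT ⟨g, hg⟩ u
        · have hσT : ∀ v : U, T (σ g v) = σ g (T v) :=
            fun v => ((memF T).mpr ⟨hT, hcase T hT⟩) g v
          rw [hεneg g hg u, hεneg g hg (T u), map_neg, hσT]
    have hd1 : dimRepHom σ σ = 4 := by
      unfold dimRepHom at hquat ⊢
      rw [hFull]; exact hquat
    have hd2 : dimRepHom εσ εσ = 4 := by
      unfold dimRepHom at hquat ⊢
      rw [hεFull]; exact hquat
    have huniv : ∀ (W : Type) [AddCommGroup W] [Module ℝ W] (ψ : Representation ℝ K W),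
        RepIso (resRep H ψ) ρ → (RepIso ψ σ ∨ RepIso ψ εσ) := by
      intro W _ _ ψ hψ
      obtain ⟨T, hTE, hT2, hcrit⟩ := key W ψ hψ
      have hTT : ∀ u : U, T (T u) = u := by
        intro u
        have h1 := hT2 u
        rw [hcase T hTE (T u)] at h1
        have h2 := congrArg (σ g₀⁻¹) h1
        rwa [hA'A, hA'A] at h2
      by_cases hT1 : ∀ u : U, T u = u
      · left
        exact (hcrit LinearMap.id (fun h u => rfl) Function.bijective_id).1
          (fun u => by simp [hT1 u])
      · right
        push_neg at hT1
        obtain ⟨u1, hu1⟩ := hT1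
        have hD0 : (T - LinearMap.id : U →ₗ[ℝ] U) ≠ 0 := by
          intro h0
          apply hu1
          have hz : (T - LinearMap.id : U →ₗ[ℝ] U) u1 = 0 := by rw [h0]; rfl
          simpa [sub_eq_zero] using hz
        have hDE : ∀ (h : H) (u : U), (T - LinearMap.id : U →ₗ[ℝ] U) (ρ h u)
            = ρ h ((T - LinearMap.id : U →ₗ[ℝ] U) u) := by
          intro h u
          simp only [LinearMap.sub_apply, LinearMap.id_coe, id_eq]
          rw [hTE, map_sub]
        obtain ⟨S, _, hSD, _⟩ := schur_aux hirr _ hDE hD0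
        have hTneg : ∀ u : U, T u = -u := by
          intro u
          have h0 : (T - LinearMap.id : U →ₗ[ℝ] U) (T u + u) = 0 := by
            simp only [LinearMap.sub_apply, LinearMap.id_coe, id_eq, map_add]
            rw [hTT u]
            abel
          have h1 := congrArg S h0
          rw [hSD, map_zero] at h1
          exact eq_neg_of_add_eq_zero_left h1
        exact (hcrit LinearMap.id (fun h u => rfl) Function.bijective_id).2
          (fun u => by simp [hTneg u])
    refine Or.inl ⟨⟨σ, εσ, hiso1, hiso2, hniso, hd1, hd2, huniv⟩, ?_⟩
    rintro ⟨σ', hσ'res, _, huniv'⟩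
    exact hniso (repIso_trans (huniv' U σ hiso1) (repIso_symm (huniv' U εσ hiso2)))
  · -- complex case: unique extension σ with endomorphism algebra of dimension 2
    push_neg at hcase
    obtain ⟨c₀, hc₀E, u2, hc₀u⟩ := hcase
    -- an invertible anticommuting element b
    have hbapp : ∀ u : U, (c₀ - (σ g₀⁻¹) ∘ₗ c₀ ∘ₗ (σ g₀)) u
        = c₀ u - σ g₀⁻¹ (c₀ (σ g₀ u)) := fun u => rfl
    have hbA : ∀ u : U, (c₀ - (σ g₀⁻¹) ∘ₗ c₀ ∘ₗ (σ g₀)) (σ g₀ u)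
        = -(σ g₀ ((c₀ - (σ g₀⁻¹) ∘ₗ c₀ ∘ₗ (σ g₀)) u)) := by
      intro u
      rw [hbapp, hbapp, hAA, hc₀E, hA'h₀, map_sub, hAA']
      abel
    have hbE : ∀ (h : H) (u : U), (c₀ - (σ g₀⁻¹) ∘ₗ c₀ ∘ₗ (σ g₀)) (ρ h u)
        = ρ h ((c₀ - (σ g₀⁻¹) ∘ₗ c₀ ∘ₗ (σ g₀)) u) := by
      intro h u
      rw [hbapp, hbapp, hc₀E, hαE c₀ hc₀E h u, ← map_sub]
    have hb0 : (c₀ - (σ g₀⁻¹) ∘ₗ c₀ ∘ₗ (σ g₀)) ≠ 0 := by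
      intro h0
      apply hc₀u
      have hz : (c₀ - (σ g₀⁻¹) ∘ₗ c₀ ∘ₗ (σ g₀)) u2 = 0 := by rw [h0]; rfl
      rw [hbapp] at hz
      have h5 : c₀ u2 = σ g₀⁻¹ (c₀ (σ g₀ u2)) := by rwa [sub_eq_zero] at hz
      rw [h5, hAA']
    obtain ⟨b', hb'E, hb'b, hbb'⟩ := schur_aux hirr _ hbE hb0
    set b : U →ₗ[ℝ] U := c₀ - (σ g₀⁻¹) ∘ₗ c₀ ∘ₗ (σ g₀) with hbdef
    have hbbij : Function.Bijective b :=
      ⟨fun x y hxy => by rw [← hb'b x, ← hb'b y, hxy], fun u => ⟨b' u, hbb' u⟩⟩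
    have hb'A : ∀ u : U, b' (σ g₀ u) = -(σ g₀ (b' u)) := by
      intro u
      have h1 : b (σ g₀ (b' u)) = -(σ g₀ u) := by rw [hbA, hbb']
      have h2 := congrArg b' h1
      rw [hb'b, map_neg] at h2
      rw [h2, neg_neg]
    -- dimension count
    have hsup : repHom σ σ ⊔ repHom σ εσ = repHom ρ ρ := by
      apply le_antisymm
      · apply sup_le
        · intro T hT; exact ((memF T).mp hT).1
        · intro T hT; exact ((memF' T).mp hT).1
      · intro T hT
        have hTE : ∀ (h : H) (u : U), T (ρ h u) = ρ h (T u) := fun h u => hT h u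
        refine Submodule.mem_sup.mpr
          ⟨(2⁻¹ : ℝ) • (T + (σ g₀⁻¹) ∘ₗ T ∘ₗ (σ g₀)), ?_,
           (2⁻¹ : ℝ) • (T - (σ g₀⁻¹) ∘ₗ T ∘ₗ (σ g₀)), ?_, ?_⟩
        · refine (memF _).mpr ⟨fun h u => ?_, fun u => ?_⟩
          · simp only [LinearMap.smul_apply, LinearMap.add_apply, LinearMap.comp_apply]
            rw [hTE h u, hαE T hTE h u, ← map_add, ← map_smul]
          · simp only [LinearMap.smul_apply, LinearMap.add_apply, LinearMap.comp_apply]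
            rw [hAA, hTE, hA'h₀, map_smul, map_add, hAA', add_comm]
        · refine (memF' _).mpr ⟨fun h u => ?_, fun u => ?_⟩
          · simp only [LinearMap.smul_apply, LinearMap.sub_apply, LinearMap.comp_apply]
            rw [hTE h u, hαE T hTE h u, ← map_sub, ← map_smul]
          · simp only [LinearMap.smul_apply, LinearMap.sub_apply, LinearMap.comp_apply]
            rw [hAA, hTE, hA'h₀, map_smul, map_sub, hAA', ← smul_neg, neg_sub]
        · ext u
          simp only [LinearMap.add_apply, LinearMap.smul_apply, LinearMap.sub_apply,
            LinearMap.comp_apply]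
          rw [← smul_add,
            show ∀ a x : U, (a + x) + (a - x) = (2 : ℝ) • a from fun a x => by
              rw [two_smul]; abel,
            smul_smul]
          norm_num
    have hinf : repHom σ σ ⊓ repHom σ εσ = ⊥ := by
      rw [eq_bot_iff]
      intro T hT
      obtain ⟨h1, h2⟩ := Submodule.mem_inf.mp hT
      obtain ⟨_, hcomm⟩ := (memF T).mp h1
      obtain ⟨_, hanti⟩ := (memF' T).mp h2
      have hz : ∀ u : U, T u = 0 := by
        intro u
        have h3 : σ g₀ (T u) = -(σ g₀ (T u)) := (hcomm u).symm.trans (hanti u)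
        have h4 : σ g₀ (T u) + σ g₀ (T u) = 0 := by
          nth_rewrite 1 [h3]
          exact neg_add_cancel _
        have h5 : (2 : ℝ) • σ g₀ (T u) = 0 := by rw [two_smul]; exact h4
        have h6 : σ g₀ (T u) = 0 := by
          rcases smul_eq_zero.mp h5 with h | h
          · norm_num at h
          · exact h
        have := congrArg (σ g₀⁻¹) h6
        rwa [hA'A, map_zero] at this
      simp only [Submodule.mem_bot]
      exact LinearMap.ext hz
    have hΦmem : ∀ S : U →ₗ[ℝ] U, S ∈ repHom σ σ → (b ∘ₗ S) ∈ repHom σ εσ := by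
      intro S hS
      obtain ⟨hSE, hScomm⟩ := (memF S).mp hS
      refine (memF' _).mpr ⟨fun h u => ?_, fun u => ?_⟩
      · simp only [LinearMap.comp_apply]; rw [hSE, hbE]
      · simp only [LinearMap.comp_apply]; rw [hScomm, hbA]
    have hΨmem : ∀ S : U →ₗ[ℝ] U, S ∈ repHom σ εσ → (b' ∘ₗ S) ∈ repHom σ σ := by
      intro S hS
      obtain ⟨hSE, hSanti⟩ := (memF' S).mp hS
      refine (memF _).mpr ⟨fun h u => ?_, fun u => ?_⟩
      · simp only [LinearMap.comp_apply]; rw [hSE, hb'E]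
      · simp only [LinearMap.comp_apply]; rw [hSanti, map_neg, hb'A, neg_neg]
    have hrank : Module.finrank ℝ (repHom σ σ) = Module.finrank ℝ (repHom σ εσ) := by
      refine LinearEquiv.finrank_eq (LinearEquiv.ofLinear
        { toFun := fun S => ⟨b ∘ₗ S.1, hΦmem S.1 S.2⟩
          map_add' := fun S S' => Subtype.ext (LinearMap.ext fun u => by
            simp [LinearMap.comp_apply])
          map_smul' := fun r S => Subtype.ext (LinearMap.ext fun u => by
            simp [LinearMap.comp_apply]) }
        { toFun := fun S => ⟨b' ∘ₗ S.1, hΨmem S.1 S.2⟩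
          map_add' := fun S S' => Subtype.ext (LinearMap.ext fun u => by
            simp [LinearMap.comp_apply])
          map_smul' := fun r S => Subtype.ext (LinearMap.ext fun u => by
            simp [LinearMap.comp_apply]) } ?_ ?_)
      · exact LinearMap.ext fun S => Subtype.ext (LinearMap.ext fun u => by
          simp [LinearMap.comp_apply, hbb'])
      · exact LinearMap.ext fun S => Subtype.ext (LinearMap.ext fun u => by
          simp [LinearMap.comp_apply, hb'b])
    have hsum := Submodule.finrank_sup_add_finrank_inf_eq (repHom σ σ) (repHom σ εσ)
    rw [hsup, hinf] at hsum
    have hq : Module.finrank ℝ (repHom ρ ρ) = 4 := hquat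
    rw [hq, finrank_bot] at hsum
    have hd : dimRepHom σ σ = 2 := by
      unfold dimRepHom
      omega
    have huniv : ∀ (W : Type) [AddCommGroup W] [Module ℝ W] (ψ : Representation ℝ K W),
        RepIso (resRep H ψ) ρ → RepIso ψ σ := by
      intro W _ _ ψ hψ
      obtain ⟨T, hTE, hT2, hcrit⟩ := key W ψ hψ
      by_cases hTn : ∀ u : U, T u = -u
      · exact (hcrit b hbE hbbij).1
          (fun u => by rw [hTn u, map_neg, map_neg, hbA, neg_neg])
      · push_neg at hTn
        obtain ⟨u1, hu1⟩ := hTn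
        have hcE : ∀ (h : H) (u : U),
            (LinearMap.id + T : U →ₗ[ℝ] U) (ρ h u) = ρ h ((LinearMap.id + T : U →ₗ[ℝ] U) u) := by
          intro h u
          simp only [LinearMap.add_apply, LinearMap.id_coe, id_eq]
          rw [hTE, map_add]
        have hc0 : (LinearMap.id + T : U →ₗ[ℝ] U) ≠ 0 := by
          intro h0
          apply hu1
          have hz : (LinearMap.id + T : U →ₗ[ℝ] U) u1 = 0 := by rw [h0]; rfl
          simp only [LinearMap.add_apply, LinearMap.id_coe, id_eq] at hz
          exact eq_neg_of_add_eq_zero_right hz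
        obtain ⟨c', hc'E, hc'c, hcc'⟩ := schur_aux hirr _ hcE hc0
        have hcbij : Function.Bijective (LinearMap.id + T : U →ₗ[ℝ] U) :=
          ⟨fun x y hxy => by rw [← hc'c x, ← hc'c y, hxy], fun u => ⟨c' u, hcc' u⟩⟩
        refine (hcrit _ hcE hcbij).1 (fun u => ?_)
        simp only [LinearMap.add_apply, LinearMap.id_coe, id_eq]
        rw [hT2, map_add]
        abel
    refine Or.inr ⟨⟨σ, hiso1, hd, huniv⟩, ?_⟩
    rintro ⟨σ₁, σ₂, h1, h2, hni, _, _, _⟩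
    exact hni (repIso_trans (huniv U σ₁ h1) (repIso_symm (huniv U σ₂ h2)))
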